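/- If e₀, e₁, …, e_N are real-valued exchangeable random variables (e.g., i.i.d.), then for any δ ∈ (0,1], the probability that e₀ exceeds the ⌈(1−δ)(N+1)⌉-th smallest value among e₁,…,e_N is at most δ + 1/(N+1). Equivalently, Prob(rank of e₀ among the N+1 values exceeds (1−δ)(N+1)) ≤ δ + 1/(N+1). -/

import Mathlib

open MeasureTheory ProbabilityTheory

open scoped Classical in
/-- Rank of index 0 among the `N+1` values, with ties broken by the auxiliary
uniform variables `U` (lexicographic comparison). -/
noncomputable def rankZero {N : ℕ} (e U : Fin (N + 1) → ℝ) : ℕ :=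
  (Finset.univ.filter fun i : Fin (N + 1) =>
    e i < e 0 ∨ (e i = e 0 ∧ U i ≤ U 0)).card


open scoped Classical in
noncomputable def rankAt {N : ℕ} (j : Fin (N + 1)) (v : Fin (N + 1) → ℝ × ℝ) : ℕ :=
  (Finset.univ.filter fun k : Fin (N + 1) =>
    (v k).1 < (v j).1 ∨ ((v k).1 = (v j).1 ∧ (v k).2 ≤ (v j).2)).card

example {N : ℕ} (v : Fin (N+1) → ℝ × ℝ) :
    rankZero (fun i => (v i).1) (fun i => (v i).2) = rankAt 0 v := rfl

open scoped Classical in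
lemma rankAt_perm {N : ℕ} (v : Fin (N + 1) → ℝ × ℝ) (σ : Equiv.Perm (Fin (N + 1))) :
    rankAt 0 (v ∘ σ) = rankAt (σ 0) v := by
  unfold rankAt
  apply Finset.card_bij (fun k _ => σ k)
  · intro a ha
    simpa using (Finset.mem_filter.mp ha).2
  · intro a _ b _ h
    exact σ.injective h
  · intro b hb
    refine ⟨σ.symm b, ?_, by simp⟩
    simp only [Finset.mem_filter, Finset.mem_univ, true_and, Function.comp_apply,
      Equiv.apply_symm_apply] at hb ⊢
    exact hb

lemma rankAt_measurable {N : ℕ} (j : Fin (N + 1)) :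
    Measurable (rankAt (N := N) j) := by
  classical
  have h : rankAt (N := N) j = fun v => ∑ k : Fin (N + 1),
      if (v k).1 < (v j).1 ∨ ((v k).1 = (v j).1 ∧ (v k).2 ≤ (v j).2) then 1 else 0 := by
    funext v; simp only [rankAt, Finset.card_filter]
  rw [h]
  apply Finset.measurable_sum
  intro k _
  apply Measurable.ite _ measurable_const measurable_const
  have h1 : Measurable fun v : Fin (N+1) → ℝ × ℝ => (v k).1 :=
    (measurable_pi_apply k).fst
  have h2 : Measurable fun v : Fin (N+1) → ℝ × ℝ => (v j).1 :=
    (measurable_pi_apply j).fst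
  have h3 : Measurable fun v : Fin (N+1) → ℝ × ℝ => (v k).2 :=
    (measurable_pi_apply k).snd
  have h4 : Measurable fun v : Fin (N+1) → ℝ × ℝ => (v j).2 :=
    (measurable_pi_apply j).snd
  exact (measurableSet_lt h1 h2).union ((measurableSet_eq_fun h1 h2).inter (measurableSet_le h3 h4))

lemma rankAt_pos {N : ℕ} (j : Fin (N + 1)) (v : Fin (N + 1) → ℝ × ℝ) :
    1 ≤ rankAt j v := by
  classical
  rw [rankAt, Finset.one_le_card]
  exact ⟨j, by simp⟩

lemma rankAt_le {N : ℕ} (j : Fin (N + 1)) (v : Fin (N + 1) → ℝ × ℝ) :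
    rankAt j v ≤ N + 1 := by
  classical
  unfold rankAt
  exact (Finset.card_filter_le _ _).trans (by simp)

lemma rankAt_strict {N : ℕ} {v : Fin (N + 1) → ℝ × ℝ} (hv : Function.Injective v)
    {i j : Fin (N + 1)} (hij : i ≠ j)
    (h : (v j).1 < (v i).1 ∨ ((v j).1 = (v i).1 ∧ (v j).2 ≤ (v i).2)) :
    rankAt j v < rankAt i v := by
  classical
  apply Finset.card_lt_card
  rw [Finset.ssubset_iff_of_subset]
  · refine ⟨i, by simp, ?_⟩
    simp only [Finset.mem_filter, Finset.mem_univ, true_and]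
    rintro (h1 | ⟨h1, h2⟩)
    · rcases h with h' | ⟨h', _⟩
      · exact absurd (h1.trans h') (lt_irrefl _)
      · rw [h'] at h1; exact absurd h1 (lt_irrefl _)
    · rcases h with h' | ⟨h', h2'⟩
      · rw [h1] at h'; exact absurd h' (lt_irrefl _)
      · exact hij (hv (Prod.ext h1 (le_antisymm h2 h2')))
  · intro k hk
    simp only [Finset.mem_filter, Finset.mem_univ, true_and] at hk ⊢
    rcases hk with h1 | ⟨h1, h2⟩
    · rcases h with h' | ⟨h', _⟩
      · exact Or.inl (h1.trans h')
      · exact Or.inl (h'.symm ▸ h1)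
    · rcases h with h' | ⟨h', h2'⟩
      · exact Or.inl (h1.symm ▸ h')
      · exact Or.inr ⟨h1.trans h', h2.trans h2'⟩

lemma count_bound {N : ℕ} {v : Fin (N + 1) → ℝ × ℝ} (hv : Function.Injective v)
    {t : ℝ} (ht : 0 ≤ t) :
    (Finset.univ.filter fun j : Fin (N+1) => t < (rankAt j v : ℝ)).card ≤ N + 1 - ⌊t⌋₊ := by
  classical
  have hcard := Finset.card_le_card_of_injOn
    (s := Finset.univ.filter fun j : Fin (N+1) => t < (rankAt j v : ℝ))
    (t := Finset.Icc (⌊t⌋₊ + 1) (N + 1)) (f := fun j => rankAt j v) ?_ ?_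
  · simpa [Nat.card_Icc] using hcard
  · intro j hj
    simp only [Finset.coe_filter, Finset.mem_coe, Finset.coe_Icc, Set.mem_Icc, Finset.mem_filter,
      Finset.mem_Icc, Finset.mem_univ, true_and, Set.mem_setOf_eq] at hj ⊢
    exact ⟨Nat.succ_le_of_lt ((Nat.floor_lt ht).mpr hj), rankAt_le j v⟩
  · intro i _ j _ hij
    by_contra hne
    rcases lt_trichotomy (v i).1 (v j).1 with h|h|h
    · exact absurd hij (rankAt_strict hv (Ne.symm hne) (Or.inl h)).ne
    · rcases le_total (v i).2 (v j).2 with h2|h2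
      · exact absurd hij (rankAt_strict hv (Ne.symm hne) (Or.inr ⟨h, h2⟩)).ne
      · exact absurd hij.symm (rankAt_strict hv hne (Or.inr ⟨h.symm, h2⟩)).ne
    · exact absurd hij.symm (rankAt_strict hv hne (Or.inl h)).ne

theorem conformal_rank_bound {Ω : Type*} [MeasurableSpace Ω]
    (P : Measure Ω) [IsProbabilityMeasure P] (N : ℕ)
    (e U : Fin (N + 1) → Ω → ℝ)
    (hme : ∀ i, Measurable (e i)) (hmU : ∀ i, Measurable (U i))
    -- exchangeability of the (value, tie-break) pairs
    (hexch : ∀ σ : Equiv.Perm (Fin (N + 1)),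
      Measure.map (fun ω => fun i => (e (σ i) ω, U (σ i) ω)) P =
        Measure.map (fun ω => fun i => (e i ω, U i ω)) P)
    -- tie-breaking works almost surely (no ties among the pairs)
    (hties : ∀ᵐ ω ∂P, Function.Injective (fun i => (e i ω, U i ω)))
    (δ : ℝ) (hδ0 : 0 < δ) (hδ1 : δ ≤ 1) :
    P {ω | (1 - δ) * (N + 1) < (rankZero (fun i => e i ω) (fun i => U i ω) : ℝ)} ≤
      ENNReal.ofReal (δ + 1 / (N + 1)) := by
  classical
  set t : ℝ := (1 - δ) * (N + 1) with hts
  have ht0 : 0 ≤ t := mul_nonneg (by linarith) (by positivity)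
  have htN : t ≤ (N : ℝ) + 1 := by nlinarith [Nat.cast_nonneg (α := ℝ) N]
  set M : ℕ := N + 1 - ⌊t⌋₊ with hM
  set p : Ω → (Fin (N+1) → ℝ × ℝ) := fun ω i => (e i ω, U i ω) with hp
  have hpm : Measurable p := measurable_pi_lambda _ fun i => (hme i).prodMk (hmU i)
  set S : Fin (N+1) → Set (Fin (N+1) → ℝ × ℝ) := fun j => {v | t < (rankAt j v : ℝ)} with hS
  have hSm : ∀ j, MeasurableSet (S j) := fun j =>
    measurableSet_lt measurable_const (measurable_from_top.comp (rankAt_measurable j))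
  -- each preimage has the same measure
  have hEq : ∀ j, P (p ⁻¹' S j) = P (p ⁻¹' S 0) := by
    intro j
    set σ : Equiv.Perm (Fin (N+1)) := Equiv.swap 0 j with hσ
    have hσm : Measurable (fun ω => fun i => (e (σ i) ω, U (σ i) ω)) :=
      measurable_pi_lambda _ fun i => (hme _).prodMk (hmU _)
    have h1 : p ⁻¹' S j = (fun ω => (p ω) ∘ σ) ⁻¹' S 0 := by
      ext ω
      simp only [Set.mem_preimage, hS, Set.mem_setOf_eq]
      rw [rankAt_perm]
      simp [hσ, Equiv.swap_apply_left]
    have h2 : (fun ω => (p ω) ∘ σ) = fun ω => fun i => (e (σ i) ω, U (σ i) ω) := rfl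
    rw [h1, h2, ← Measure.map_apply hσm (hSm 0), hexch σ,
      Measure.map_apply hpm (hSm 0)]
  -- sum of the measures is bounded by M
  have hsum : ∑ j : Fin (N+1), P (p ⁻¹' S j) ≤ (M : ENNReal) := by
    have hrw : ∀ j : Fin (N+1), P (p ⁻¹' S j) =
        ∫⁻ ω, (p ⁻¹' S j).indicator (fun _ => (1 : ENNReal)) ω ∂P := by
      intro j
      exact (lintegral_indicator_one (hpm (hSm j))).symm
    simp_rw [hrw]
    rw [← lintegral_finset_sum _ (fun j _ =>
      (measurable_const.indicator (hpm (hSm j))))]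
    calc ∫⁻ ω, ∑ j : Fin (N+1), (p ⁻¹' S j).indicator (fun _ => (1:ENNReal)) ω ∂P
        ≤ ∫⁻ _, (M : ENNReal) ∂P := by
          apply lintegral_mono_ae
          filter_upwards [hties] with ω hω
          have hsum_eq : ∑ j : Fin (N+1), (p ⁻¹' S j).indicator (fun _ => (1:ENNReal)) ω
              = ((Finset.univ.filter fun j : Fin (N+1) => t < (rankAt j (p ω) : ℝ)).card : ENNReal) := by
            rw [Finset.card_filter]
            push_cast
            apply Finset.sum_congr rfl
            intro j _
            by_cases hj : t < (rankAt j (p ω) : ℝ) <;>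
              simp [Set.indicator_apply, Set.mem_preimage, hS, Set.mem_setOf_eq, hj]
          rw [hsum_eq]
          exact_mod_cast Nat.cast_le.mpr (count_bound hω ht0)
      _ = (M : ENNReal) := by simp
  -- conclude
  have hconst : ∑ j : Fin (N+1), P (p ⁻¹' S j) = (N + 1 : ENNReal) * P (p ⁻¹' S 0) := by
    rw [Finset.sum_congr rfl (fun j _ => hEq j), Finset.sum_const]
    simp [nsmul_eq_mul]
  have hmul : (N + 1 : ENNReal) * P (p ⁻¹' S 0) ≤ (M : ENNReal) := hconst ▸ hsum
  have hgoal : P (p ⁻¹' S 0) ≤ (M : ENNReal) / (N + 1 : ENNReal) := by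
    rw [ENNReal.le_div_iff_mul_le (by simp) (by simp)]
    rwa [mul_comm]
  have hfloor_le : ⌊t⌋₊ ≤ N + 1 := by
    have h1 : (N : ℝ) + 1 = ((N + 1 : ℕ) : ℝ) := by push_cast; ring
    have h2 := Nat.floor_mono (htN.trans_eq h1)
    rwa [Nat.floor_natCast] at h2
  have hreal : (M : ℝ) ≤ (δ + 1 / (N + 1)) * ((N : ℝ) + 1) := by
    have hMle : (M : ℝ) = (N : ℝ) + 1 - (⌊t⌋₊ : ℝ) := by
      rw [hM, Nat.cast_sub hfloor_le]; push_cast; ring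
    have hfl : t < (⌊t⌋₊ : ℝ) + 1 := Nat.lt_floor_add_one t
    have hN1 : (0 : ℝ) < (N : ℝ) + 1 := by positivity
    rw [add_mul, div_mul_cancel₀ _ hN1.ne']
    rw [hMle]
    nlinarith
  have hfin : (M : ENNReal) / (N + 1 : ENNReal) ≤ ENNReal.ofReal (δ + 1 / (N + 1)) := by
    apply ENNReal.div_le_of_le_mul
    have h1 : ((N : ENNReal) + 1) = ENNReal.ofReal ((N : ℝ) + 1) := by
      rw [ENNReal.ofReal_add (by positivity) zero_le_one]
      simp [ENNReal.ofReal_natCast]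
    have h2 : (M : ENNReal) = ENNReal.ofReal (M : ℝ) := by
      simp [ENNReal.ofReal_natCast]
    rw [h1, h2, ← ENNReal.ofReal_mul (by positivity)]
    exact ENNReal.ofReal_le_ofReal hreal
  have hset : {ω | (1 - δ) * (N + 1) < (rankZero (fun i => e i ω) (fun i => U i ω) : ℝ)}
      = p ⁻¹' S 0 := rfl
  rw [hset]
  exact hgoal.trans hfin
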